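/- Fix an integer j ≥ 2, a real number s, and a time t > 0. There exist a constant c > 0 and an integer N₀ such that for every integer N ≥ N₀, the third Picard iterate at the data φ_N satisfies ‖A₃(φ_N)(t)‖_{Ḣ^s} ≥ c·N^{−2s−(2j−1)}. -/

import Mathlib

open MeasureTheory
open scoped ENNReal

noncomputable section

/-- Dispersion `P(k) = (−1)^{j+1} k^{2j+1}` of the higher-order KdV equation. -/
def disp (j : ℕ) (k : ℤ) : ℝ := (-1 : ℝ) ^ (j + 1) * (k : ℝ) ^ (2 * j + 1)

/-- Fourier coefficients of the free evolution `u₁(t) = S(t)u₀`, where `a` is the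
(zero-mean) sequence of Fourier coefficients of `u₀`. -/
def c1 (j : ℕ) (a : ℤ → ℂ) (k : ℤ) (t : ℝ) : ℂ :=
  Complex.exp (Complex.I * (disp j k : ℝ) * (t : ℝ)) * a k

/-- Fourier coefficients of the Duhamel term `∫₀ᵗ S(t−s)∂_x(u v) ds`, computed
coefficientwise: the `k`-th coefficient of `∂_x(uv)(s)` is `i k Σ_{k₁} c(k₁,s) d(k−k₁,s)`. -/
def duh (j : ℕ) (c d : ℤ → ℝ → ℂ) (k : ℤ) (t : ℝ) : ℂ :=
  ∫ s in (0 : ℝ)..t, Complex.exp (Complex.I * (disp j k : ℝ) * ((t - s : ℝ))) *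
    (Complex.I * (k : ℂ) * ∑' k₁ : ℤ, c k₁ s * d (k - k₁) s)

/-- Fourier coefficients of the second Picard iterate
`A₂(u₀)(t) = ∫₀ᵗ S(t−s)∂_x[(u₁(s))²] ds`. -/
def A2 (j : ℕ) (a : ℤ → ℂ) (k : ℤ) (t : ℝ) : ℂ := duh j (c1 j a) (c1 j a) k t

/-- Fourier coefficients of the third Picard iterate
`A₃(u₀)(t) = 2∫₀ᵗ S(t−s)∂_x[u₁(s)·A₂(u₀)(s)] ds`. -/
def A3 (j : ℕ) (a : ℤ → ℂ) (k : ℤ) (t : ℝ) : ℂ := 2 * duh j (c1 j a) (A2 j a) k t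

/-- Homogeneous Sobolev norm `‖v‖_{Ḣ^s} = (Σ_{k≠0}|k|^{2s}|v̂(k)|²)^{1/2}`. -/
def HdotS (s : ℝ) (v : ℤ → ℂ) : ℝ≥0∞ :=
  (∑' k : ℤ, if k = 0 then 0 else
    ENNReal.ofReal (|(k : ℝ)| ^ (2 * s)) * (‖v k‖₊ : ℝ≥0∞) ^ 2) ^ (1 / 2 : ℝ)

/-- Fourier coefficients of `φ_N(x) = N^{−s}(e^{iNx} + e^{−iNx})`. -/
def phi (s : ℝ) (N : ℕ) : ℤ → ℂ :=
  fun k => if k = (N : ℤ) ∨ k = -(N : ℤ) then (((N : ℝ) ^ (-s) : ℝ) : ℂ) else 0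

/- ### Auxiliary lemmas -/

lemma disp_neg' (j : ℕ) (k : ℤ) : disp j (-k) = - disp j k := by
  have hodd : Odd (2 * j + 1) := ⟨j, by ring⟩
  unfold disp; push_cast
  rw [hodd.neg_pow]; ring

lemma A2_zero' (j : ℕ) (a : ℤ → ℂ) (σ : ℝ) : A2 j a 0 σ = 0 := by
  simp [A2, duh]

lemma c1_phi_of_ne' (j : ℕ) (s : ℝ) (N : ℕ) (k : ℤ) (hk1 : k ≠ (N : ℤ))
    (hk2 : k ≠ -(N : ℤ)) (σ : ℝ) : c1 j (phi s N) k σ = 0 := by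
  simp [c1, phi, hk1, hk2]

lemma c1_phi_pos' (j : ℕ) (s : ℝ) (N : ℕ) (σ : ℝ) :
    c1 j (phi s N) (N : ℤ) σ
      = Complex.exp (Complex.I * (disp j (N : ℤ) : ℝ) * (σ : ℝ)) * (((N : ℝ) ^ (-s) : ℝ) : ℂ) := by
  simp [c1, phi]

lemma c1_phi_neg' (j : ℕ) (s : ℝ) (N : ℕ) (σ : ℝ) :
    c1 j (phi s N) (-(N : ℤ)) σ
      = Complex.exp (Complex.I * ((-(disp j (N : ℤ)) : ℝ) : ℂ) * (σ : ℝ)) * (((N : ℝ) ^ (-s) : ℝ) : ℂ) := by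
  simp [c1, phi, disp_neg']

lemma norm_exp_I_mul' (a b : ℝ) : ‖Complex.exp (Complex.I * (a : ℂ) * (b : ℂ))‖ = 1 := by
  rw [show Complex.I * (a : ℂ) * (b : ℂ) = ((a * b : ℝ) : ℂ) * Complex.I by push_cast; ring]
  exact Complex.norm_exp_ofReal_mul_I _

lemma norm_exp_neg_I_mul' (a b : ℝ) : ‖Complex.exp (-(Complex.I * (a : ℂ)) * (b : ℂ))‖ = 1 := by
  rw [show -(Complex.I * (a : ℂ)) * (b : ℂ) = ((-(a * b) : ℝ) : ℂ) * Complex.I by push_cast; ring]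
  exact Complex.norm_exp_ofReal_mul_I _

/-- Explicit value of the second Picard iterate at frequency `2N`. -/
lemma A2_val' (j : ℕ) (s : ℝ) (N : ℕ) (hN : 1 ≤ N) (e1 e2 D : ℝ)
    (he1 : e1 = disp j (N : ℤ)) (he2 : e2 = disp j (2 * (N : ℤ))) (hD : D = 2 * e1 - e2)
    (hD0 : D ≠ 0) (σ : ℝ) :
    A2 j (phi s N) (2 * (N : ℤ)) σ
      = (Complex.I * (2 * (N : ℂ)) * (((N : ℝ) ^ (-s) : ℝ) : ℂ) ^ 2 / (Complex.I * (D : ℂ)))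
          * Complex.exp (Complex.I * (e2 : ℂ) * (σ : ℂ))
          * (Complex.exp (Complex.I * (D : ℂ) * (σ : ℂ)) - 1) := by
  set ns : ℂ := (((N : ℝ) ^ (-s) : ℝ) : ℂ) with hns
  have hNZ : (1 : ℤ) ≤ (N : ℤ) := by exact_mod_cast hN
  have hts : ∀ τ : ℝ,
      (∑' k₁ : ℤ, c1 j (phi s N) k₁ τ * c1 j (phi s N) (2 * (N : ℤ) - k₁) τ)
        = c1 j (phi s N) (N : ℤ) τ * c1 j (phi s N) (N : ℤ) τ := by
    intro τ
    rw [tsum_eq_single (N : ℤ)]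
    · rw [show 2 * (N : ℤ) - (N : ℤ) = (N : ℤ) by ring]
    · intro k₁ hk₁
      by_cases h2 : k₁ = -(N : ℤ)
      · subst h2
        rw [c1_phi_of_ne' j s N (2 * (N : ℤ) - -(N : ℤ)) (by omega) (by omega) τ, mul_zero]
      · rw [c1_phi_of_ne' j s N k₁ hk₁ h2 τ, zero_mul]
  have hc : Complex.I * (D : ℂ) ≠ 0 := by
    simp [Complex.I_ne_zero, Complex.ofReal_ne_zero, hD0]
  unfold A2 duh
  rw [intervalIntegral.integral_congr
      (g := fun τ : ℝ => (Complex.I * (2 * (N : ℂ)) * ns ^ 2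
          * Complex.exp (Complex.I * (e2 : ℂ) * (σ : ℂ)))
          * Complex.exp ((Complex.I * (D : ℂ)) * (τ : ℂ)))
      (fun τ _ => by
        rw [hts τ, c1_phi_pos', ← he2, hD, he1, he2]
        push_cast
        rw [show Complex.I * (disp j (2 * (N : ℤ)) : ℂ) * ((σ : ℂ) - τ)
              = Complex.I * (disp j (2 * (N : ℤ)) : ℂ) * σ
                + -(Complex.I * (disp j (2 * (N : ℤ)) : ℂ) * τ) by ring,
            show Complex.I * ((2 : ℂ) * (disp j (N : ℤ) : ℂ) - (disp j (2 * (N : ℤ)) : ℂ)) * (τ : ℂ)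
              = Complex.I * (disp j (N : ℤ) : ℂ) * τ + (Complex.I * (disp j (N : ℤ) : ℂ) * τ
                + -(Complex.I * (disp j (2 * (N : ℤ)) : ℂ) * τ)) by ring]
        simp only [Complex.exp_add]
        ring)]
  rw [intervalIntegral.integral_const_mul, integral_exp_mul_complex hc]
  rw [show ((0 : ℝ) : ℂ) = 0 by norm_num, mul_zero, Complex.exp_zero]
  ring

/-- Explicit value of the third Picard iterate at frequency `N`. -/
lemma A3_val' (j : ℕ) (s : ℝ) (N : ℕ) (hN : 1 ≤ N) (t : ℝ) (e1 e2 D : ℝ)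
    (he1 : e1 = disp j (N : ℤ)) (he2 : e2 = disp j (2 * (N : ℤ))) (hD : D = 2 * e1 - e2)
    (hD0 : D ≠ 0) :
    A3 j (phi s N) (N : ℤ) t
      = 2 * (Complex.I * (N : ℂ)
            * (Complex.I * (2 * (N : ℂ)) * (((N : ℝ) ^ (-s) : ℝ) : ℂ) ^ 2 / (Complex.I * (D : ℂ)))
            * (((N : ℝ) ^ (-s) : ℝ) : ℂ) * Complex.exp (Complex.I * (e1 : ℂ) * (t : ℂ)))
          * ((t : ℂ) + (Complex.exp (-(Complex.I * (D : ℂ)) * (t : ℂ)) - 1) / (Complex.I * (D : ℂ))) := by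
  set ns : ℂ := (((N : ℝ) ^ (-s) : ℝ) : ℂ) with hns
  have hNZ : (1 : ℤ) ≤ (N : ℤ) := by exact_mod_cast hN
  set C2 : ℂ := Complex.I * (2 * (N : ℂ)) * ns ^ 2 / (Complex.I * (D : ℂ)) with hC2
  have hts : ∀ τ : ℝ,
      (∑' k₁ : ℤ, c1 j (phi s N) k₁ τ * A2 j (phi s N) ((N : ℤ) - k₁) τ)
        = c1 j (phi s N) (-(N : ℤ)) τ * A2 j (phi s N) (2 * (N : ℤ)) τ := by
    intro τ
    rw [tsum_eq_single (-(N : ℤ))]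
    · rw [show (N : ℤ) - -(N : ℤ) = 2 * (N : ℤ) by ring]
    · intro k₁ hk₁
      by_cases h2 : k₁ = (N : ℤ)
      · subst h2
        rw [show (N : ℤ) - (N : ℤ) = 0 by ring, A2_zero', mul_zero]
      · rw [c1_phi_of_ne' j s N k₁ h2 hk₁ τ, zero_mul]
  have hc : Complex.I * (D : ℂ) ≠ 0 := by
    simp [Complex.I_ne_zero, Complex.ofReal_ne_zero, hD0]
  have hcont : Continuous fun σ : ℝ => Complex.exp (-(Complex.I * (D : ℂ)) * (σ : ℂ)) := by
    fun_prop
  unfold A3 duh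
  rw [intervalIntegral.integral_congr
      (g := fun σ : ℝ => (Complex.I * (N : ℂ) * C2 * ns * Complex.exp (Complex.I * (e1 : ℂ) * (t : ℂ)))
          * (1 - Complex.exp (-(Complex.I * (D : ℂ)) * (σ : ℂ))))
      (fun σ _ => by
        rw [hts σ, c1_phi_neg', A2_val' j s N hN e1 e2 D he1 he2 hD hD0 σ, ← hns, ← hC2, ← he1]
        push_cast
        rw [show Complex.I * (e1 : ℂ) * ((t : ℂ) - σ)
              = Complex.I * (e1 : ℂ) * t + -(Complex.I * (e1 : ℂ) * σ) by ring,
            show Complex.I * (-(e1 : ℂ)) * (σ : ℂ) = -(Complex.I * (e1 : ℂ) * σ) by ring,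
            hD]
        push_cast
        rw [show Complex.I * ((2 : ℂ) * (e1 : ℂ) - (e2 : ℂ)) * (σ : ℂ)
              = (Complex.I * (e1 : ℂ) * σ + Complex.I * (e1 : ℂ) * σ) - Complex.I * (e2 : ℂ) * σ by ring,
            show -(Complex.I * ((2 : ℂ) * (e1 : ℂ) - (e2 : ℂ))) * (σ : ℂ)
              = Complex.I * (e2 : ℂ) * σ - (Complex.I * (e1 : ℂ) * σ + Complex.I * (e1 : ℂ) * σ) by ring]
        simp only [Complex.exp_add, Complex.exp_sub, Complex.exp_neg]
        field_simp)]
  rw [intervalIntegral.integral_const_mul,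
      intervalIntegral.integral_sub intervalIntegrable_const (hcont.intervalIntegrable 0 t),
      integral_exp_mul_complex (by simpa using hc), intervalIntegral.integral_const]
  rw [show ((0 : ℝ) : ℂ) = 0 by norm_num, mul_zero, Complex.exp_zero, sub_zero,
      Complex.real_smul, mul_one, div_neg]
  ring

/-- **Estimate (6.03):** the third Picard iterate at the data `φ_N` satisfies
`‖A₃(φ_N)(t)‖_{Ḣ^s} ≥ c·N^{−2s−(2j−1)}` for all large `N`. -/
theorem stmt_17 (j : ℕ) (hj : 2 ≤ j) (s t : ℝ) (ht : 0 < t) :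
    ∃ c : ℝ, 0 < c ∧ ∃ N₀ : ℕ, ∀ N : ℕ, N₀ ≤ N →
      ENNReal.ofReal (c * (N : ℝ) ^ (-2 * s - (2 * (j : ℝ) - 1))) ≤
        HdotS s (fun k => A3 j (phi s N) k t) := by
  have h2lt : (2 : ℝ) < 2 ^ (2 * j + 1) := by
    calc (2 : ℝ) = 2 ^ 1 := (pow_one 2).symm
    _ < 2 ^ (2 * j + 1) := by exact pow_lt_pow_right₀ one_lt_two (by omega)
  set C : ℝ := 2 ^ (2 * j + 1) - 2 with hCdef
  have hCpos : 0 < C := by simp only [hCdef, sub_pos]; exact h2lt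
  refine ⟨2 * t / C, by positivity, ⌈4 / t⌉₊ + 1, ?_⟩
  intro N hNge
  have hN1 : 1 ≤ N := by omega
  have hNpos : (0 : ℝ) < N := by exact_mod_cast hN1
  set e1 : ℝ := disp j (N : ℤ) with he1
  set e2 : ℝ := disp j (2 * (N : ℤ)) with he2
  set D : ℝ := 2 * e1 - e2 with hD
  have hDval : D = (-1 : ℝ) ^ (j + 1) * (2 - 2 ^ (2 * j + 1)) * (N : ℝ) ^ (2 * j + 1) := by
    rw [hD, he1, he2]; unfold disp; push_cast; rw [mul_pow]; ring
  have habsD : |D| = C * (N : ℝ) ^ (2 * j + 1) := by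
    rw [hDval, abs_mul, abs_mul, abs_pow, abs_neg, abs_one, one_pow, one_mul,
        abs_of_nonneg (by positivity : (0 : ℝ) ≤ (N : ℝ) ^ (2 * j + 1)),
        abs_of_nonpos (by linarith : (2 : ℝ) - 2 ^ (2 * j + 1) ≤ 0)]
    rw [hCdef]; ring
  have hD0 : D ≠ 0 := by
    rw [hDval]
    have : ((-1 : ℝ) ^ (j + 1)) ≠ 0 := by positivity
    have h2 : (2 : ℝ) - 2 ^ (2 * j + 1) ≠ 0 := by linarith
    positivity
  have habsDpos : 0 < |D| := abs_pos.mpr hD0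
  -- |D| ≥ 4/t
  have hC1 : (1 : ℝ) ≤ C := by
    have : (2 : ℝ) ^ 5 ≤ 2 ^ (2 * j + 1) := pow_le_pow_right₀ one_le_two (by omega)
    rw [hCdef]; norm_num at this ⊢; linarith
  have hNle : (N : ℝ) ≤ (N : ℝ) ^ (2 * j + 1) :=
    le_self_pow₀ (by exact_mod_cast hN1) (by omega)
  have h4N : 4 / t ≤ (N : ℝ) := by
    have h1 : (4 / t : ℝ) ≤ (⌈4 / t⌉₊ : ℝ) := Nat.le_ceil _
    have h2 : ((⌈4 / t⌉₊ : ℕ) : ℝ) ≤ (N : ℝ) := by exact_mod_cast le_trans (by omega) hNge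
    linarith
  have h4D : 4 / t ≤ |D| := by
    calc (4 / t : ℝ) ≤ (N : ℝ) := h4N
    _ ≤ (N : ℝ) ^ (2 * j + 1) := hNle
    _ ≤ C * (N : ℝ) ^ (2 * j + 1) := le_mul_of_one_le_left (by positivity) hC1
    _ = |D| := habsD.symm
  have hnspos : 0 < (N : ℝ) ^ (-s) := Real.rpow_pos_of_pos hNpos _
  -- the value of A3 at frequency N
  have hA3 := A3_val' j s N hN1 t e1 e2 D he1 he2 hD hD0
  set W : ℂ := (t : ℂ) + (Complex.exp (-(Complex.I * (D : ℂ)) * (t : ℂ)) - 1) / (Complex.I * (D : ℂ))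
    with hW
  -- lower bound for ‖W‖
  have hnormW : t / 2 ≤ ‖W‖ := by
    have h1 : ‖((t : ℝ) : ℂ)‖ = t := by
      rw [Complex.norm_real, Real.norm_eq_abs, abs_of_pos ht]
    have hden : ‖Complex.I * (D : ℂ)‖ = |D| := by
      rw [norm_mul, Complex.norm_I, Complex.norm_real, one_mul, Real.norm_eq_abs]
    have h2 : ‖(Complex.exp (-(Complex.I * (D : ℂ)) * (t : ℂ)) - 1) / (Complex.I * (D : ℂ))‖
        ≤ 2 / |D| := by
      rw [norm_div, hden]
      gcongr
      calc ‖Complex.exp (-(Complex.I * (D : ℂ)) * (t : ℂ)) - 1‖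
          ≤ ‖Complex.exp (-(Complex.I * (D : ℂ)) * (t : ℂ))‖ + ‖(1 : ℂ)‖ := norm_sub_le _ _
        _ = 2 := by rw [norm_exp_neg_I_mul', norm_one]; norm_num
    have h3 : 2 / |D| ≤ t / 2 := by
      rw [div_le_div_iff₀ habsDpos (by norm_num : (0:ℝ) < 2)]
      rw [div_le_iff₀ ht] at h4D
      nlinarith
    have h4 : ‖((t : ℝ) : ℂ)‖ - ‖-((Complex.exp (-(Complex.I * (D : ℂ)) * (t : ℂ)) - 1) / (Complex.I * (D : ℂ)))‖ ≤ ‖W‖ := by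
      have := norm_sub_norm_le ((t : ℝ) : ℂ)
        (-((Complex.exp (-(Complex.I * (D : ℂ)) * (t : ℂ)) - 1) / (Complex.I * (D : ℂ))))
      rw [sub_neg_eq_add] at this
      exact this
    rw [norm_neg, h1] at h4
    linarith
  -- norm of A3 at frequency N
  have hKnorm : ‖(2 : ℂ) * (Complex.I * (N : ℂ)
        * (Complex.I * (2 * (N : ℂ)) * (((N : ℝ) ^ (-s) : ℝ) : ℂ) ^ 2 / (Complex.I * (D : ℂ)))
        * (((N : ℝ) ^ (-s) : ℝ) : ℂ) * Complex.exp (Complex.I * (e1 : ℂ) * (t : ℂ)))‖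
      = 4 * (N : ℝ) ^ 2 * ((N : ℝ) ^ (-s)) ^ 3 / |D| := by
    simp only [norm_mul, norm_div, norm_pow, Complex.norm_I, Complex.norm_real,
        Complex.norm_natCast, Complex.norm_ofNat, Real.norm_eq_abs, norm_exp_I_mul', one_mul]
    rw [abs_of_pos hnspos]
    ring
  have hnormA3 : 2 * t * (N : ℝ) ^ 2 * ((N : ℝ) ^ (-s)) ^ 3 / |D| ≤ ‖A3 j (phi s N) (N : ℤ) t‖ := by
    rw [hA3, norm_mul, hKnorm]
    have h := mul_le_mul_of_nonneg_left hnormW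
      (by positivity : (0 : ℝ) ≤ 4 * (N : ℝ) ^ 2 * ((N : ℝ) ^ (-s)) ^ 3 / |D|)
    calc 2 * t * (N : ℝ) ^ 2 * ((N : ℝ) ^ (-s)) ^ 3 / |D|
        = 4 * (N : ℝ) ^ 2 * ((N : ℝ) ^ (-s)) ^ 3 / |D| * (t / 2) := by ring
      _ ≤ 4 * (N : ℝ) ^ 2 * ((N : ℝ) ^ (-s)) ^ 3 / |D| * ‖W‖ := h
  -- the key real inequality
  have hkey : (N : ℝ) ^ s * (2 * t * (N : ℝ) ^ 2 * ((N : ℝ) ^ (-s)) ^ 3 / |D|)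
      = 2 * t / C * (N : ℝ) ^ (-2 * s - (2 * (j : ℝ) - 1)) := by
    have hcollapse : (N : ℝ) ^ s * ((N : ℝ) ^ (2 : ℕ) * ((N : ℝ) ^ (-s)) ^ (3 : ℕ)
          / (N : ℝ) ^ (2 * j + 1)) = (N : ℝ) ^ (-2 * s - (2 * (j : ℝ) - 1)) := by
      have ec : ((N : ℝ) ^ (-s)) ^ (3 : ℕ) = (N : ℝ) ^ (-s * (3 : ℕ)) := by
        rw [← Real.rpow_natCast ((N : ℝ) ^ (-s)) 3, ← Real.rpow_mul hNpos.le]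
      rw [ec, ← Real.rpow_natCast (N : ℝ) 2, ← Real.rpow_natCast (N : ℝ) (2 * j + 1),
          ← Real.rpow_add hNpos, ← Real.rpow_sub hNpos, ← Real.rpow_add hNpos]
      congr 1
      push_cast
      ring
    rw [habsD]
    calc (N : ℝ) ^ s * (2 * t * (N : ℝ) ^ 2 * ((N : ℝ) ^ (-s)) ^ 3
          / (C * (N : ℝ) ^ (2 * j + 1)))
        = 2 * t / C * ((N : ℝ) ^ s * ((N : ℝ) ^ (2 : ℕ) * ((N : ℝ) ^ (-s)) ^ (3 : ℕ)
          / (N : ℝ) ^ (2 * j + 1))) := by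
          have hZ : ((N : ℝ) ^ (2 * j + 1)) ≠ 0 := by positivity
          field_simp
      _ = 2 * t / C * (N : ℝ) ^ (-2 * s - (2 * (j : ℝ) - 1)) := by rw [hcollapse]
  have hfinal : 2 * t / C * (N : ℝ) ^ (-2 * s - (2 * (j : ℝ) - 1))
      ≤ (N : ℝ) ^ s * ‖A3 j (phi s N) (N : ℤ) t‖ := by
    rw [← hkey]
    exact mul_le_mul_of_nonneg_left hnormA3 (Real.rpow_nonneg hNpos.le _)
  -- pass to the Sobolev norm
  simp only [HdotS]
  set A : ℝ := 2 * t / C * (N : ℝ) ^ (-2 * s - (2 * (j : ℝ) - 1)) with hAdef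
  have hA0 : 0 ≤ A := by positivity
  have hne0 : ((N : ℤ)) ≠ 0 := by
    have : (0 : ℤ) < (N : ℤ) := by exact_mod_cast hN1
    omega
  have hterm : ENNReal.ofReal ((N : ℝ) ^ (2 * s)) * ((‖A3 j (phi s N) (N : ℤ) t‖₊ : ℝ≥0∞)) ^ 2
      ≤ ∑' k : ℤ, (if k = 0 then 0 else
          ENNReal.ofReal (|(k : ℝ)| ^ (2 * s)) * (‖A3 j (phi s N) k t‖₊ : ℝ≥0∞) ^ 2) := by
    have h := ENNReal.le_tsum (f := fun k : ℤ => if k = 0 then 0 else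
      ENNReal.ofReal (|(k : ℝ)| ^ (2 * s)) * (‖A3 j (phi s N) k t‖₊ : ℝ≥0∞) ^ 2) (N : ℤ)
    rw [if_neg hne0, show |(((N : ℤ) : ℝ))| = (N : ℝ) by push_cast; exact abs_of_pos hNpos] at h
    exact h
  have hs2 : ((N : ℝ) ^ s) ^ (2 : ℕ) = (N : ℝ) ^ (2 * s) := by
    rw [← Real.rpow_natCast ((N : ℝ) ^ s) 2, ← Real.rpow_mul hNpos.le]
    norm_num [mul_comm]
  have hstep : (ENNReal.ofReal A) ^ (2 : ℕ)
      ≤ ENNReal.ofReal ((N : ℝ) ^ (2 * s)) * ((‖A3 j (phi s N) (N : ℤ) t‖₊ : ℝ≥0∞)) ^ 2 := by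
    calc (ENNReal.ofReal A) ^ (2 : ℕ)
        ≤ (ENNReal.ofReal ((N : ℝ) ^ s * ‖A3 j (phi s N) (N : ℤ) t‖)) ^ (2 : ℕ) := by
          gcongr

      _ = ENNReal.ofReal ((N : ℝ) ^ (2 * s)) * ((‖A3 j (phi s N) (N : ℤ) t‖₊ : ℝ≥0∞)) ^ 2 := by
          rw [ENNReal.ofReal_mul (Real.rpow_nonneg hNpos.le _), ofReal_norm, enorm_eq_nnnorm,
              mul_pow, ← ENNReal.ofReal_pow (Real.rpow_nonneg hNpos.le _), hs2]
  refine le_trans (le_of_eq ?_) (ENNReal.rpow_le_rpow (le_trans hstep hterm)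
    (by norm_num : (0 : ℝ) ≤ 1 / 2))
  rw [← ENNReal.rpow_natCast (ENNReal.ofReal A) 2, ← ENNReal.rpow_mul]
  norm_num

end
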